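/- Let N and M be natural numbers with N > 0. Then the sum, over all functions f : Fin M → Fin N, of the cardinality of the image of f (i.e., card (Finset.image f Finset.univ)) equals N * (N^M - (N-1)^M). Equivalently, if M values are drawn independently and uniformly at random from a set of size N, the expected number of distinct values obtained is N * (1 - ((N-1)/N)^M). -/

import Mathlib

lemma count_avoid (N M : ℕ) (y : Fin N) :
    (Finset.univ.filter fun f : Fin M → Fin N => ∀ x, f x ≠ y).card = (N - 1) ^ M := by
  rw [← Fintype.card_subtype]
  have e : {f : Fin M → Fin N // ∀ x, f x ≠ y} ≃ (Fin M → {z : Fin N // z ≠ y}) :=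
    { toFun := fun f x => ⟨f.1 x, f.2 x⟩
      invFun := fun g => ⟨fun x => (g x).1, fun x => (g x).2⟩
      left_inv := fun f => rfl
      right_inv := fun g => rfl }
  have hc : Fintype.card {z : Fin N // z ≠ y} = N - 1 := by
    simp [Fintype.card_subtype_compl]
  rw [Fintype.card_congr e, Fintype.card_fun, hc, Fintype.card_fin]

theorem expected_distinct_values (N M : ℕ) (hN : 0 < N) :
    (∑ f : Fin M → Fin N, (Finset.image f Finset.univ).card)
      = N * (N ^ M - (N - 1) ^ M) ∧
    (∑ f : Fin M → Fin N, ((Finset.image f Finset.univ).card : ℝ)) / (N : ℝ) ^ M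
      = (N : ℝ) * (1 - (((N : ℝ) - 1) / N) ^ M) := by
  have hy : ∀ y : Fin N,
      (Finset.univ.filter fun f : Fin M → Fin N => y ∈ Finset.image f Finset.univ).card
        = N ^ M - (N - 1) ^ M := by
    intro y
    have h : (Finset.univ.filter fun f : Fin M → Fin N => y ∈ Finset.image f Finset.univ)
        = (Finset.univ.filter fun f : Fin M → Fin N => ∀ x, f x ≠ y)ᶜ := by
      ext f
      simp [not_forall]
    rw [h, Finset.card_compl, count_avoid, Fintype.card_fun, Fintype.card_fin, Fintype.card_fin]
  have part1 : (∑ f : Fin M → Fin N, (Finset.image f Finset.univ).card)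
      = N * (N ^ M - (N - 1) ^ M) := by
    calc (∑ f : Fin M → Fin N, (Finset.image f Finset.univ).card)
        = ∑ f : Fin M → Fin N, ∑ y : Fin N, if y ∈ Finset.image f Finset.univ then 1 else 0 := by
          refine Finset.sum_congr rfl fun f _ => ?_
          rw [Finset.sum_ite_mem, Finset.univ_inter, Finset.sum_const, smul_eq_mul, mul_one]
      _ = ∑ y : Fin N, ∑ f : Fin M → Fin N, if y ∈ Finset.image f Finset.univ then 1 else 0 :=
          Finset.sum_comm
      _ = ∑ y : Fin N,
          (Finset.univ.filter fun f : Fin M → Fin N => y ∈ Finset.image f Finset.univ).card := by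
          refine Finset.sum_congr rfl fun y _ => ?_
          rw [Finset.card_filter]
      _ = ∑ _y : Fin N, (N ^ M - (N - 1) ^ M) := Finset.sum_congr rfl fun y _ => hy y
      _ = N * (N ^ M - (N - 1) ^ M) := by
          rw [Finset.sum_const, Finset.card_univ, Fintype.card_fin, smul_eq_mul]
  refine ⟨part1, ?_⟩
  have hle : (N - 1) ^ M ≤ N ^ M := Nat.pow_le_pow_left (Nat.sub_le N 1) M
  have hcast : (∑ f : Fin M → Fin N, ((Finset.image f Finset.univ).card : ℝ))
      = (N : ℝ) * ((N : ℝ) ^ M - ((N : ℝ) - 1) ^ M) := by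
    have := congrArg (fun n : ℕ => (n : ℝ)) part1
    push_cast [Nat.cast_sub hle, Nat.cast_sub hN] at this
    convert this using 3
  rw [hcast]
  have hN' : (N : ℝ) ≠ 0 := Nat.cast_ne_zero.mpr hN.ne'
  field_simp
  rw [div_pow, mul_sub, mul_one, mul_div_assoc', mul_div_cancel_left₀ _ (pow_ne_zero M hN')]
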